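/- Let G be a nonempty finite additive commutative group, and let A, B, C, D be nonempty finite types. Let W1 : Ω → D, X1 : Ω → A, S12 : Ω → G, Y2 : Ω → C be random variables such that S12 is independent of the pair (W1, X1). Let φ : A → B and f : A → G be functions, and set S11 := φ ∘ X1 and Y1 := (f ∘ X1) + S12 (pointwise addition in G). Then H(Y2 | W1) − H(Y1 | W1) ≤ H(S11 | ⟨Y1, W1⟩) + H(Y2 | ⟨S12, S11, W1⟩). -/

import Mathlib

open MeasureTheory ProbabilityTheory Real

/-- Shannon entropy (natural logarithm) of a random variable with values in a finite type. -/
noncomputable def entropy {Ω : Type*} [MeasurableSpace Ω] (μ : Measure Ω)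
    {S : Type*} [Fintype S] (X : Ω → S) : ℝ :=
  - ∑ x : S, ((μ (X ⁻¹' {x})).toReal * Real.log (μ (X ⁻¹' {x})).toReal)

/-- Conditional entropy H(X | Y) := H(⟨X,Y⟩) − H(Y). -/
noncomputable def condEntropy {Ω : Type*} [MeasurableSpace Ω] (μ : Measure Ω)
    {S T : Type*} [Fintype S] [Fintype T] (X : Ω → S) (Y : Ω → T) : ℝ :=
  entropy μ (fun ω => (X ω, Y ω)) - entropy μ Y

/-- Mutual information I(X : Y) := H(X) + H(Y) − H(⟨X,Y⟩). -/
noncomputable def mutualInfo {Ω : Type*} [MeasurableSpace Ω] (μ : Measure Ω)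
    {S T : Type*} [Fintype S] [Fintype T] (X : Ω → S) (Y : Ω → T) : ℝ :=
  entropy μ X + entropy μ Y - entropy μ (fun ω => (X ω, Y ω))

namespace Stmt3Aux

variable {S : Type*} [Fintype S]

/-- mass of the fiber of `g` over `y`, for a weight `p`. -/
noncomputable def pm (p : S → ℝ) {Y : Type*} [Fintype Y] [DecidableEq Y] (g : S → Y) (y : Y) : ℝ :=
  ∑ s, if g s = y then p s else 0

/-- entropy of the pushforward of `p` under `g`. -/
noncomputable def ent' (p : S → ℝ) {Y : Type*} [Fintype Y] [DecidableEq Y] (g : S → Y) : ℝ :=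
  ∑ y, Real.negMulLog (pm p g y)

variable {p : S → ℝ}

lemma pm_nonneg (hp : ∀ s, 0 ≤ p s) {Y : Type*} [Fintype Y] [DecidableEq Y] (g : S → Y) (y : Y) :
    0 ≤ pm p g y := by
  refine Finset.sum_nonneg fun s _ => ?_
  split <;> simp [hp s]

lemma pm_sum {Y : Type*} [Fintype Y] [DecidableEq Y] (g : S → Y) :
    ∑ y, pm p g y = ∑ s, p s := by
  unfold pm
  rw [Finset.sum_comm]
  simp

lemma pm_comp {Y Z : Type*} [Fintype Y] [Fintype Z] [DecidableEq Y] [DecidableEq Z]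
    (e : Y → Z) (g : S → Y) (z : Z) :
    pm p (fun s => e (g s)) z = ∑ y, if e y = z then pm p g y else 0 := by
  unfold pm
  have : ∀ y : Y, (if e y = z then (∑ s, if g s = y then p s else 0) else 0)
      = ∑ s, if e y = z then (if g s = y then p s else 0) else 0 := by
    intro y; split_ifs with hy <;> simp
  rw [Finset.sum_congr rfl fun y _ => this y, Finset.sum_comm]
  refine Finset.sum_congr rfl fun s _ => ?_
  have h2 : ∀ y : Y, (if e y = z then (if g s = y then p s else 0) else 0)
      = if g s = y then (if e y = z then p s else 0) else 0 := by
    intro y; split_ifs <;> simp_all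
  rw [Finset.sum_congr rfl fun y _ => h2 y, Finset.sum_ite_eq]
  simp

lemma pm_weight {Y Z : Type*} [Fintype Y] [Fintype Z] [DecidableEq Y] [DecidableEq Z]
    (e : Y → Z) (g : S → Y) (h : Z → ℝ) :
    ∑ y, pm p g y * h (e y) = ∑ z, pm p (fun s => e (g s)) z * h z := by
  have hz : ∀ z, pm p (fun s => e (g s)) z * h z
      = ∑ y, if e y = z then pm p g y * h z else 0 := by
    intro z
    rw [pm_comp, Finset.sum_mul]
    exact Finset.sum_congr rfl fun y _ => by split_ifs <;> simp
  rw [Finset.sum_congr rfl fun z _ => hz z, Finset.sum_comm]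
  refine Finset.sum_congr rfl fun y _ => ?_
  have : ∀ z, (if e y = z then pm p g y * h z else 0)
      = if e y = z then pm p g y * h (e y) else 0 := by
    intro z; split_ifs with hzz <;> simp [hzz]
  rw [Finset.sum_congr rfl fun z _ => this z, Finset.sum_ite_eq]
  simp

lemma negMulLog_sum_le {ι : Type*} (t : Finset ι) (a : ι → ℝ) (ha : ∀ i ∈ t, 0 ≤ a i) :
    Real.negMulLog (∑ i ∈ t, a i) ≤ ∑ i ∈ t, Real.negMulLog (a i) := by
  have hq : 0 ≤ ∑ i ∈ t, a i := Finset.sum_nonneg ha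
  have h1 : Real.negMulLog (∑ i ∈ t, a i)
      = ∑ i ∈ t, -(a i * Real.log (∑ j ∈ t, a j)) := by
    rw [Real.negMulLog, neg_mul, Finset.sum_neg_distrib, ← Finset.sum_mul]
  rw [h1]
  refine Finset.sum_le_sum fun i hi => ?_
  rcases eq_or_lt_of_le (ha i hi) with h0 | h0
  · simp [← h0]
  · have hle : a i ≤ ∑ j ∈ t, a j := Finset.single_le_sum ha hi
    have : Real.log (a i) ≤ Real.log (∑ j ∈ t, a j) := Real.log_le_log h0 hle
    rw [Real.negMulLog, neg_mul]
    nlinarith [h0, this]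

lemma ent'_comp_le (hp : ∀ s, 0 ≤ p s) {Y Z : Type*} [Fintype Y] [Fintype Z]
    [DecidableEq Y] [DecidableEq Z] (e : Y → Z) (g : S → Y) :
    ent' p (fun s => e (g s)) ≤ ent' p g := by
  unfold ent'
  have key : ∀ z, Real.negMulLog (pm p (fun s => e (g s)) z)
      ≤ ∑ y, if e y = z then Real.negMulLog (pm p g y) else 0 := by
    intro z
    rw [pm_comp]
    refine le_trans (negMulLog_sum_le _ _ fun y _ => ?_) ?_
    · split <;> simp [pm_nonneg hp]
    · refine le_of_eq (Finset.sum_congr rfl fun y _ => ?_)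
      split <;> simp
  refine le_trans (Finset.sum_le_sum fun z _ => key z) ?_
  rw [Finset.sum_comm]
  refine le_of_eq (Finset.sum_congr rfl fun y _ => ?_)
  rw [Finset.sum_ite_eq]; simp

lemma ent'_comp_inj (hp : ∀ s, 0 ≤ p s) {Y Z : Type*} [Fintype Y] [Fintype Z] [Nonempty Y]
    [DecidableEq Y] [DecidableEq Z] {e : Y → Z} (he : Function.Injective e) (g : S → Y) :
    ent' p (fun s => e (g s)) = ent' p g := by
  refine le_antisymm (ent'_comp_le hp e g) ?_
  have hg : g = fun s => Function.invFun e (e (g s)) := by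
    funext s; rw [Function.leftInverse_invFun he]
  calc ent' p g = ent' p (fun s => Function.invFun e ((fun s => e (g s)) s)) := by rw [← hg]
    _ ≤ ent' p (fun s => e (g s)) := ent'_comp_le hp _ _

lemma ent'_indep (hp1 : ∑ s, p s = 1) {U V : Type*} [Fintype U] [Fintype V]
    [DecidableEq U] [DecidableEq V] (X : S → U) (Y : S → V)
    (h : ∀ u v, pm p (fun s => (X s, Y s)) (u, v) = pm p X u * pm p Y v) :
    ent' p (fun s => (X s, Y s)) = ent' p X + ent' p Y := by
  unfold ent'
  rw [Fintype.sum_prod_type]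
  have h1 : ∀ u v, Real.negMulLog (pm p (fun s => (X s, Y s)) (u, v))
      = pm p Y v * Real.negMulLog (pm p X u) + pm p X u * Real.negMulLog (pm p Y v) := by
    intro u v; rw [h u v, Real.negMulLog_mul]
  rw [Finset.sum_congr rfl fun u _ => Finset.sum_congr rfl fun v _ => h1 u v]
  have hX : ∑ u, pm p X u = 1 := by rw [pm_sum, hp1]
  have hY : ∑ v, pm p Y v = 1 := by rw [pm_sum, hp1]
  have h2 : ∀ u, ∑ v, (pm p Y v * Real.negMulLog (pm p X u)
        + pm p X u * Real.negMulLog (pm p Y v))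
      = Real.negMulLog (pm p X u) + pm p X u * ∑ v, Real.negMulLog (pm p Y v) := by
    intro u
    rw [Finset.sum_add_distrib, ← Finset.sum_mul, hY, one_mul, Finset.mul_sum]
  rw [Finset.sum_congr rfl fun u _ => h2 u, Finset.sum_add_distrib, ← Finset.sum_mul, hX,
    one_mul]

lemma gibbs {ι : Type*} [Fintype ι] (P Q : ι → ℝ) (hP : ∀ i, 0 ≤ P i) (hQ : ∀ i, 0 ≤ Q i)
    (hsum : ∑ i, Q i ≤ ∑ i, P i) (hpos : ∀ i, 0 < P i → 0 < Q i) :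
    ∑ i, P i * Real.log (Q i) ≤ ∑ i, P i * Real.log (P i) := by
  rw [← sub_nonpos, ← Finset.sum_sub_distrib]
  have key : ∀ i, P i * Real.log (Q i) - P i * Real.log (P i) ≤ Q i - P i := by
    intro i
    rcases eq_or_lt_of_le (hP i) with h0 | h0
    · simp [← h0, hQ i]
    · have hq := hpos i h0
      have hd : 0 < Q i / P i := div_pos hq h0
      have hlog := Real.log_le_sub_one_of_pos hd
      rw [Real.log_div (ne_of_gt hq) (ne_of_gt h0)] at hlog
      have := mul_le_mul_of_nonneg_left hlog (le_of_lt h0)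
      calc P i * Real.log (Q i) - P i * Real.log (P i)
          = P i * (Real.log (Q i) - Real.log (P i)) := by ring
        _ ≤ P i * (Q i / P i - 1) := this
        _ = Q i - P i := by field_simp
  refine le_trans (Finset.sum_le_sum fun i _ => key i) ?_
  rw [Finset.sum_sub_distrib]
  linarith


lemma ent'_cond_comp (hp : ∀ s, 0 ≤ p s) {U V W : Type*} [Fintype U] [Fintype V] [Fintype W]
    [DecidableEq U] [DecidableEq V] [DecidableEq W]
    (X : S → U) (Y : S → V) (F : V → W) :
    ent' p (fun s => (X s, Y s)) - ent' p Y
      ≤ ent' p (fun s => (X s, F (Y s))) - ent' p (fun s => F (Y s)) := by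
  set a : U × V → ℝ := pm p (fun s => (X s, Y s)) with ha
  set b : U × W → ℝ := pm p (fun s => (X s, F (Y s))) with hb
  set c : V → ℝ := pm p Y with hc
  set d : W → ℝ := pm p (fun s => F (Y s)) with hd
  have ha0 : ∀ i, 0 ≤ a i := pm_nonneg hp _
  have hb0 : ∀ i, 0 ≤ b i := pm_nonneg hp _
  have hc0 : ∀ v, 0 ≤ c v := pm_nonneg hp _
  have hd0 : ∀ w, 0 ≤ d w := pm_nonneg hp _
  -- fiber decompositions
  have hbdec : ∀ uw : U × W, b uw = ∑ uv : U × V, if (uv.1, F uv.2) = uw then a uv else 0 := by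
    intro uw
    exact pm_comp (e := fun uv : U × V => (uv.1, F uv.2)) (g := fun s => (X s, Y s)) uw
  have hcdec : ∀ v, c v = ∑ uv : U × V, if uv.2 = v then a uv else 0 := by
    intro v
    exact pm_comp (e := fun uv : U × V => uv.2) (g := fun s => (X s, Y s)) v
  have hddec : ∀ w, d w = ∑ v, if F v = w then c v else 0 :=
    fun w => pm_comp (e := F) (g := Y) w
  have hab : ∀ u v, a (u, v) ≤ b (u, F v) := by
    intro u v
    rw [hbdec]
    have := Finset.single_le_sum
      (f := fun uv : U × V => if (uv.1, F uv.2) = (u, F v) then a uv else 0)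
      (fun i _ => by split <;> simp [ha0]) (Finset.mem_univ (u, v))
    simpa using this
  have hac : ∀ u v, a (u, v) ≤ c v := by
    intro u v
    rw [hcdec]
    have := Finset.single_le_sum (f := fun uv : U × V => if uv.2 = v then a uv else 0)
      (fun i _ => by split <;> simp [ha0]) (Finset.mem_univ (u, v))
    simpa using this
  have hcd : ∀ v, c v ≤ d (F v) := by
    intro v
    rw [hddec]
    have := Finset.single_le_sum (f := fun v' => if F v' = F v then c v' else 0)
      (fun i _ => by split <;> simp [hc0]) (Finset.mem_univ v)
    simpa using this
  -- marginal of b over U is d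
  have hbd : ∀ w, ∑ u, b (u, w) = d w := by
    intro w
    have hrow : ∀ u, b (u, w) = ∑ v, if F v = w then a (u, v) else 0 := by
      intro u
      rw [hbdec, Fintype.sum_prod_type]
      have inner : ∀ u', (∑ v, if ((u', F v) : U × W) = (u, w) then a (u', v) else 0)
          = if u' = u then (∑ v, if F v = w then a (u', v) else 0) else 0 := by
        intro u'
        split_ifs with hu
        · subst hu
          refine Finset.sum_congr rfl fun v _ => ?_
          simp [Prod.ext_iff]
        · refine Finset.sum_eq_zero fun v _ => ?_
          simp [Prod.ext_iff, hu]
      rw [Finset.sum_congr rfl fun u' _ => inner u', Finset.sum_ite_eq']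
      simp
    rw [Finset.sum_congr rfl fun u _ => hrow u, Finset.sum_comm, hddec]
    refine Finset.sum_congr rfl fun v _ => ?_
    split_ifs with hv
    · rw [hcdec, Fintype.sum_prod_type]
      refine (Finset.sum_congr rfl fun u _ => ?_).symm
      rw [Finset.sum_ite_eq']
      simp
    · exact Finset.sum_eq_zero fun u _ => rfl
  -- the Gibbs comparison distribution
  set Q : U × V → ℝ := fun uv => b (uv.1, F uv.2) * c uv.2 / d (F uv.2) with hQ
  have hQ0 : ∀ i, 0 ≤ Q i := fun i => div_nonneg (mul_nonneg (hb0 _) (hc0 _)) (hd0 _)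
  have hQpos : ∀ i, 0 < a i → 0 < Q i := by
    intro ⟨u, v⟩ hpos
    have h1 : 0 < b (u, F v) := lt_of_lt_of_le hpos (hab u v)
    have h2 : 0 < c v := lt_of_lt_of_le hpos (hac u v)
    have h3 : 0 < d (F v) := lt_of_lt_of_le h2 (hcd v)
    exact div_pos (mul_pos h1 h2) h3
  have hQsum : ∑ i, Q i ≤ ∑ i, a i := by
    have h1 : ∑ i : U × V, Q i = ∑ v, (∑ u, b (u, F v)) * c v / d (F v) := by
      rw [Fintype.sum_prod_type_right]
      refine Finset.sum_congr rfl fun v _ => ?_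
      rw [Finset.sum_mul, Finset.sum_div]
    rw [h1]
    have h2 : ∑ i : U × V, a i = ∑ v, c v := by
      rw [Fintype.sum_prod_type_right]
      refine Finset.sum_congr rfl fun v _ => ?_
      rw [hcdec, Fintype.sum_prod_type]
      refine (Finset.sum_congr rfl fun u _ => ?_).symm
      rw [Finset.sum_ite_eq']
      simp
    rw [h2]
    refine Finset.sum_le_sum fun v _ => ?_
    rw [hbd (F v)]
    rcases eq_or_lt_of_le (hd0 (F v)) with h0 | h0
    · rw [← h0, div_zero]
      exact hc0 v
    · rw [mul_comm, mul_div_assoc, div_self (ne_of_gt h0), mul_one]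
  -- apply Gibbs
  have hG := gibbs a Q ha0 hQ0 hQsum hQpos
  -- expand ∑ a log Q
  have hlogQ : ∑ i, a i * Real.log (Q i)
      = ∑ i : U × V, a i * Real.log (b (i.1, F i.2))
        + ∑ i : U × V, a i * Real.log (c i.2)
        - ∑ i : U × V, a i * Real.log (d (F i.2)) := by
    rw [← Finset.sum_add_distrib, ← Finset.sum_sub_distrib]
    refine Finset.sum_congr rfl fun i _ => ?_
    rcases eq_or_lt_of_le (ha0 i) with h0 | h0
    · rw [← h0]; ring
    · obtain ⟨u, v⟩ := i
      have h1 : 0 < b (u, F v) := lt_of_lt_of_le h0 (hab u v)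
      have h2 : 0 < c v := lt_of_lt_of_le h0 (hac u v)
      have h3 : 0 < d (F v) := lt_of_lt_of_le h2 (hcd v)
      have hQval : Q (u, v) = b (u, F v) * c v / d (F v) := rfl
      rw [hQval, Real.log_div (ne_of_gt (mul_pos h1 h2)) (ne_of_gt h3),
        Real.log_mul (ne_of_gt h1) (ne_of_gt h2)]
      ring
  -- identify the three sums via pm_weight
  have hw1 : ∑ i : U × V, a i * Real.log (b (i.1, F i.2))
      = ∑ uw : U × W, b uw * Real.log (b uw) :=
    pm_weight (e := fun uv : U × V => (uv.1, F uv.2)) (g := fun s => (X s, Y s))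
      (h := fun uw => Real.log (b uw))
  have hw2 : ∑ i : U × V, a i * Real.log (c i.2) = ∑ v, c v * Real.log (c v) :=
    pm_weight (e := fun uv : U × V => uv.2) (g := fun s => (X s, Y s))
      (h := fun v => Real.log (c v))
  have hw3 : ∑ i : U × V, a i * Real.log (d (F i.2)) = ∑ w, d w * Real.log (d w) :=
    pm_weight (e := fun uv : U × V => F uv.2) (g := fun s => (X s, Y s))
      (h := fun w => Real.log (d w))
  have hentA : ent' p (fun s => (X s, Y s)) = - ∑ i, a i * Real.log (a i) := by
    unfold ent'
    rw [← Finset.sum_neg_distrib]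
    exact Finset.sum_congr rfl fun i _ => by rw [Real.negMulLog, neg_mul]
  have hentB : ent' p (fun s => (X s, F (Y s))) = - ∑ uw, b uw * Real.log (b uw) := by
    unfold ent'
    rw [← Finset.sum_neg_distrib]
    exact Finset.sum_congr rfl fun i _ => by rw [Real.negMulLog, neg_mul]
  have hentC : ent' p Y = - ∑ v, c v * Real.log (c v) := by
    unfold ent'
    rw [← Finset.sum_neg_distrib]
    exact Finset.sum_congr rfl fun i _ => by rw [Real.negMulLog, neg_mul]
  have hentD : ent' p (fun s => F (Y s)) = - ∑ w, d w * Real.log (d w) := by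
    unfold ent'
    rw [← Finset.sum_neg_distrib]
    exact Finset.sum_congr rfl fun i _ => by rw [Real.negMulLog, neg_mul]
  rw [hlogQ, hw1, hw2, hw3] at hG
  rw [hentA, hentB, hentC, hentD]
  linarith


lemma pm_pair_comp_right {Yu Yv Yw : Type*} [Fintype Yu] [Fintype Yv] [Fintype Yw]
    [DecidableEq Yu] [DecidableEq Yv] [DecidableEq Yw]
    (U : S → Yu) (V : S → Yv) (e : Yv → Yw)
    (hbase : ∀ u v, pm p (fun s => (U s, V s)) (u, v) = pm p U u * pm p V v)
    (u : Yu) (w : Yw) :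
    pm p (fun s => (U s, e (V s))) (u, w) = pm p U u * pm p (fun s => e (V s)) w := by
  have h1 : pm p (fun s => (U s, e (V s))) (u, w)
      = ∑ yv : Yu × Yv, if (yv.1, e yv.2) = (u, w) then pm p (fun s => (U s, V s)) yv else 0 :=
    pm_comp (e := fun yv : Yu × Yv => (yv.1, e yv.2)) (g := fun s => (U s, V s)) (u, w)
  have h2 : pm p (fun s => e (V s)) w = ∑ v, if e v = w then pm p V v else 0 :=
    pm_comp (e := e) (g := V) w
  rw [h1, h2, Finset.mul_sum, Fintype.sum_prod_type]
  have inner : ∀ u', (∑ v, if ((u', e v) : Yu × Yw) = (u, w)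
        then pm p (fun s => (U s, V s)) (u', v) else 0)
      = if u' = u then (∑ v, if e v = w then pm p U u' * pm p V v else 0) else 0 := by
    intro u'
    split_ifs with hu
    · subst hu
      refine Finset.sum_congr rfl fun v _ => ?_
      rw [hbase]
      simp [Prod.ext_iff]
    · refine Finset.sum_eq_zero fun v _ => ?_
      simp [Prod.ext_iff, hu]
  rw [Finset.sum_congr rfl fun u' _ => inner u', Finset.sum_ite_eq']
  simp only [Finset.mem_univ, if_true]
  refine Finset.sum_congr rfl fun v _ => ?_
  split_ifs <;> simp

lemma pm_eq_measure {Ω : Type*} [MeasurableSpace Ω] (μ : MeasureTheory.Measure Ω)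
    [MeasureTheory.IsFiniteMeasure μ]
    {S' : Type*} [Fintype S'] [DecidableEq S'] [MeasurableSpace S'] [MeasurableSingletonClass S']
    {T : Ω → S'} (hT : Measurable T)
    {Y : Type*} [Fintype Y] [DecidableEq Y] (g : S' → Y) (y : Y) :
    pm (fun s => (μ (T ⁻¹' {s})).toReal) g y = (μ ((fun ω => g (T ω)) ⁻¹' {y})).toReal := by
  have hset : ((fun ω => g (T ω)) ⁻¹' {y})
      = T ⁻¹' ↑(Finset.univ.filter (fun s => g s = y)) := by
    ext ω; simp
  rw [hset, ← MeasureTheory.sum_measure_preimage_singleton _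
      (fun s _ => hT (measurableSet_singleton s)),
    ENNReal.toReal_sum (fun s _ => MeasureTheory.measure_ne_top μ _)]
  unfold pm
  rw [Finset.sum_filter]

lemma entropy_eq_ent' {Ω : Type*} [MeasurableSpace Ω] (μ : MeasureTheory.Measure Ω)
    [MeasureTheory.IsFiniteMeasure μ]
    {S' : Type*} [Fintype S'] [DecidableEq S'] [MeasurableSpace S'] [MeasurableSingletonClass S']
    {T : Ω → S'} (hT : Measurable T)
    {Y : Type*} [Fintype Y] [DecidableEq Y] (g : S' → Y) :
    entropy μ (fun ω => g (T ω)) = ent' (fun s => (μ (T ⁻¹' {s})).toReal) g := by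
  unfold entropy ent'
  rw [← Finset.sum_neg_distrib]
  refine Finset.sum_congr rfl fun y _ => ?_
  rw [pm_eq_measure μ hT g y, Real.negMulLog, neg_mul]


lemma key {A G B C D : Type*} [Fintype A] [Fintype G] [Fintype B] [Fintype C] [Fintype D]
    [Nonempty A] [Nonempty G] [Nonempty B] [Nonempty C] [Nonempty D]
    [DecidableEq A] [DecidableEq G] [DecidableEq B] [DecidableEq C] [DecidableEq D]
    [AddCommGroup G]
    (p : S → ℝ) (hp : ∀ s, 0 ≤ p s) (hp1 : ∑ s, p s = 1)
    (vX : S → A) (vS : S → G) (vY2 : S → C) (vW : S → D) (φ : A → B) (f : A → G)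
    (hindep : ∀ u v, pm p (fun s => (vS s, (vW s, vX s))) (u, v)
      = pm p vS u * pm p (fun s => (vW s, vX s)) v) :
    (ent' p (fun s => (vY2 s, vW s)) - ent' p vW)
      - (ent' p (fun s => (f (vX s) + vS s, vW s)) - ent' p vW)
    ≤ (ent' p (fun s => (φ (vX s), (f (vX s) + vS s, vW s)))
        - ent' p (fun s => (f (vX s) + vS s, vW s)))
      + (ent' p (fun s => (vY2 s, (vS s, (φ (vX s), vW s))))
        - ent' p (fun s => (vS s, (φ (vX s), vW s)))) := by
  have g1 : ent' p (fun s => (vY2 s, vW s))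
      ≤ ent' p (fun s => (vY2 s, (vS s, (φ (vX s), vW s)))) :=
    ent'_comp_le hp (e := fun z : C × (G × B × D) => (z.1, z.2.2.2))
      (g := fun s => (vY2 s, (vS s, (φ (vX s), vW s))))
  have hind2 : ∀ u (v : B × D), pm p (fun s => (vS s, (φ (vX s), vW s))) (u, v)
      = pm p vS u * pm p (fun s => (φ (vX s), vW s)) v :=
    fun u v => pm_pair_comp_right vS (fun s => (vW s, vX s))
      (fun dv : D × A => (φ dv.2, dv.1)) hindep u v
  have g2 : ent' p (fun s => (vS s, (φ (vX s), vW s)))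
      = ent' p vS + ent' p (fun s => (φ (vX s), vW s)) :=
    ent'_indep hp1 _ _ hind2
  have hind3 : ∀ u (v : A × D), pm p (fun s => (vS s, (vX s, vW s))) (u, v)
      = pm p vS u * pm p (fun s => (vX s, vW s)) v :=
    fun u v => pm_pair_comp_right vS (fun s => (vW s, vX s))
      (fun dv : D × A => (dv.2, dv.1)) hindep u v
  have g6 : ent' p (fun s => (vS s, (vX s, vW s)))
      = ent' p vS + ent' p (fun s => (vX s, vW s)) :=
    ent'_indep hp1 _ _ hind3
  have g3 : ent' p (fun s => (φ (vX s), (f (vX s) + vS s, vW s)))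
      = ent' p (fun s => (f (vX s) + vS s, (φ (vX s), vW s))) := by
    have hinj : Function.Injective (fun z : G × (B × D) => ((z.2.1, (z.1, z.2.2)) : B × (G × D))) := by
      intro z1 z2 h
      simp only [Prod.mk.injEq] at h
      obtain ⟨hb, hy, hd⟩ := h
      exact Prod.ext hy (Prod.ext hb hd)
    exact ent'_comp_inj hp hinj (fun s => (f (vX s) + vS s, (φ (vX s), vW s)))
  have g4 : ent' p (fun s => (f (vX s) + vS s, (vX s, vW s))) - ent' p (fun s => (vX s, vW s))
      ≤ ent' p (fun s => (f (vX s) + vS s, (φ (vX s), vW s)))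
        - ent' p (fun s => (φ (vX s), vW s)) :=
    ent'_cond_comp hp (X := fun s => f (vX s) + vS s) (Y := fun s => (vX s, vW s))
      (F := fun ad : A × D => (φ ad.1, ad.2))
  have g5 : ent' p (fun s => (f (vX s) + vS s, (vX s, vW s)))
      = ent' p (fun s => (vS s, (vX s, vW s))) := by
    have hinj : Function.Injective (fun z : G × (A × D) => ((z.1 - f z.2.1, z.2) : G × (A × D))) := by
      intro z1 z2 h
      simp only [Prod.mk.injEq] at h
      obtain ⟨hy, hz⟩ := h
      have ha : z1.2.1 = z2.2.1 := by rw [hz]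
      rw [ha] at hy
      have : z1.1 = z2.1 := by
        have := sub_left_injective (G := G) (b := f z2.2.1) hy
        exact this
      exact Prod.ext this hz
    have heq1 : ent' p (fun s => ((fun z : G × (A × D) => ((z.1 - f z.2.1, z.2) : G × (A × D)))
          ((fun s => (f (vX s) + vS s, (vX s, vW s))) s)))
        = ent' p (fun s => (f (vX s) + vS s, (vX s, vW s))) :=
      ent'_comp_inj hp hinj (fun s => (f (vX s) + vS s, (vX s, vW s)))
    have heq2 : (fun s => ((fun z : G × (A × D) => ((z.1 - f z.2.1, z.2) : G × (A × D)))
          ((fun s => (f (vX s) + vS s, (vX s, vW s))) s)))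
        = fun s => ((vS s, (vX s, vW s)) : G × (A × D)) := by
      funext s
      simp [add_sub_cancel_left]
    rw [← heq1, heq2]
  linarith [g1, g2, g3, g4, g5, g6]

end Stmt3Aux

theorem stmt3 {Ω : Type*} [MeasurableSpace Ω] (μ : Measure Ω) [IsProbabilityMeasure μ]
    {G A B C D : Type*} [Fintype G] [Nonempty G] [AddCommGroup G]
    [MeasurableSpace G] [DiscreteMeasurableSpace G]
    [Fintype A] [Nonempty A] [MeasurableSpace A] [DiscreteMeasurableSpace A]
    [Fintype B] [Nonempty B]
    [Fintype C] [Nonempty C] [MeasurableSpace C] [DiscreteMeasurableSpace C]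
    [Fintype D] [Nonempty D] [MeasurableSpace D] [DiscreteMeasurableSpace D]
    (W1 : Ω → D) (X1 : Ω → A) (S12 : Ω → G) (Y2 : Ω → C)
    (hW1 : Measurable W1) (hX1 : Measurable X1) (hS12 : Measurable S12) (hY2 : Measurable Y2)
    (hIndep : IndepFun S12 (fun ω => (W1 ω, X1 ω)) μ)
    (φ : A → B) (f : A → G)
    (S11 : Ω → B) (hS11 : S11 = φ ∘ X1)
    (Y1 : Ω → G) (hY1 : Y1 = fun ω => f (X1 ω) + S12 ω) :
    condEntropy μ Y2 W1 - condEntropy μ Y1 W1 ≤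
      condEntropy μ S11 (fun ω => (Y1 ω, W1 ω))
      + condEntropy μ Y2 (fun ω => (S12 ω, S11 ω, W1 ω)) := by
  classical
  have hT : Measurable (fun ω => ((X1 ω, (S12 ω, (Y2 ω, W1 ω))) : A × G × C × D)) :=
    hX1.prodMk (hS12.prodMk (hY2.prodMk hW1))
  set P : A × G × C × D → ℝ :=
    fun s => (μ ((fun ω => ((X1 ω, (S12 ω, (Y2 ω, W1 ω))) : A × G × C × D)) ⁻¹' {s})).toReal
    with hP
  have hp : ∀ s, 0 ≤ P s := fun s => ENNReal.toReal_nonneg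
  have hp1 : ∑ s, P s = 1 := by
    rw [hP]
    rw [← ENNReal.toReal_sum (fun s _ => MeasureTheory.measure_ne_top μ _),
      MeasureTheory.sum_measure_preimage_singleton _ (fun s _ => hT (measurableSet_singleton s))]
    simp
  have hprod : ∀ (u : G) (v : D × A),
      Stmt3Aux.pm P (fun s : A × G × C × D => (s.2.1, (s.2.2.2, s.1))) (u, v)
      = Stmt3Aux.pm P (fun s : A × G × C × D => s.2.1) u
        * Stmt3Aux.pm P (fun s : A × G × C × D => (s.2.2.2, s.1)) v := by
    intro u v
    rw [hP]
    simp only [Stmt3Aux.pm_eq_measure μ hT]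
    have hset : ((fun ω => (S12 ω, (W1 ω, X1 ω))) ⁻¹' {(u, v)})
        = S12 ⁻¹' {u} ∩ (fun ω => (W1 ω, X1 ω)) ⁻¹' {v} := by
      ext ω
      simp [Prod.ext_iff]
    rw [hset, hIndep.measure_inter_preimage_eq_mul _ _ (measurableSet_singleton u)
      (measurableSet_singleton v), ENNReal.toReal_mul]
  rw [hS11, hY1]
  unfold condEntropy
  simp only [Function.comp_apply]
  have e1 : entropy μ (fun ω => (Y2 ω, W1 ω))
      = Stmt3Aux.ent' P (fun s : A × G × C × D => (s.2.2.1, s.2.2.2)) :=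
    Stmt3Aux.entropy_eq_ent' (g := fun s : A × G × C × D => (s.2.2.1, s.2.2.2)) μ hT
  have e2 : entropy μ W1 = Stmt3Aux.ent' P (fun s : A × G × C × D => s.2.2.2) :=
    Stmt3Aux.entropy_eq_ent' (g := fun s : A × G × C × D => s.2.2.2) μ hT
  have e3 : entropy μ (fun ω => (f (X1 ω) + S12 ω, W1 ω))
      = Stmt3Aux.ent' P (fun s : A × G × C × D => (f s.1 + s.2.1, s.2.2.2)) :=
    Stmt3Aux.entropy_eq_ent' (g := fun s : A × G × C × D => (f s.1 + s.2.1, s.2.2.2)) μ hT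
  have e4 : entropy μ (fun ω => (φ (X1 ω), (f (X1 ω) + S12 ω, W1 ω)))
      = Stmt3Aux.ent' P (fun s : A × G × C × D => (φ s.1, (f s.1 + s.2.1, s.2.2.2))) :=
    Stmt3Aux.entropy_eq_ent' (g := fun s : A × G × C × D => (φ s.1, (f s.1 + s.2.1, s.2.2.2))) μ hT
  have e5 : entropy μ (fun ω => (Y2 ω, (S12 ω, (φ (X1 ω), W1 ω))))
      = Stmt3Aux.ent' P (fun s : A × G × C × D => (s.2.2.1, (s.2.1, (φ s.1, s.2.2.2)))) :=
    Stmt3Aux.entropy_eq_ent' (g := fun s : A × G × C × D => (s.2.2.1, (s.2.1, (φ s.1, s.2.2.2)))) μ hT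
  have e6 : entropy μ (fun ω => (S12 ω, (φ (X1 ω), W1 ω)))
      = Stmt3Aux.ent' P (fun s : A × G × C × D => (s.2.1, (φ s.1, s.2.2.2))) :=
    Stmt3Aux.entropy_eq_ent' (g := fun s : A × G × C × D => (s.2.1, (φ s.1, s.2.2.2))) μ hT
  rw [e1, e2, e3, e4, e5, e6]
  exact Stmt3Aux.key P hp hp1 (fun s => s.1) (fun s => s.2.1) (fun s => s.2.2.1)
    (fun s => s.2.2.2) φ f hprod
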